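/- (Hyperbolic right-triangle trigonometry) Let a, r, b ∈ 𝐇 be pairwise distinct points with a right angle at r, i.e., t_r(a) ∗ t_r(b) = 0. Set B = d(a,r), A = d(r,b), C = d(a,b), and let α be the angle at a, i.e., cos α = t_a(b) ∗ t_a(r) and sin α = √(1 − cos²α). Then cos α = tanh(B)/tanh(C), sin α = sinh(A)/sinh(C), and tan α = tanh(A)/sinh(B). -/

import Mathlib

noncomputable section

/-- The Lorentzian inner product `u ∗ v = u₁v₁ + u₂v₂ − u₃v₃` on ℝ³. -/
def lor (u v : Fin 3 → ℝ) : ℝ := u 0 * v 0 + u 1 * v 1 - u 2 * v 2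

/-- The hyperboloid model of the hyperbolic plane. -/
def Hyp : Set (Fin 3 → ℝ) := {u | lor u u = -1 ∧ 0 < u 2}

/-- The Lorentzian cross product `u ⊗ v = J (u × v)`, `J = diag(1,1,−1)`. -/
def lcross (u v : Fin 3 → ℝ) : Fin 3 → ℝ :=
  ![u 1 * v 2 - u 2 * v 1, u 2 * v 0 - u 0 * v 2, -(u 0 * v 1 - u 1 * v 0)]

/-- Lorentzian magnitude `‖w‖ = √(w ∗ w)` (for `w` with `w ∗ w ≥ 0`). -/
def lnorm (w : Fin 3 → ℝ) : ℝ := Real.sqrt (lor w w)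

/-- The unit tangent vector at `p` toward `y`:
`t_p(y) = (y + (p ∗ y)p)/√(y ∗ y + (p ∗ y)²)`. -/
def tang (p y : Fin 3 → ℝ) : Fin 3 → ℝ :=
  (Real.sqrt (lor y y + lor p y ^ 2))⁻¹ • (y + lor p y • p)

/-- Inverse hyperbolic cosine. -/
def arcosh (x : ℝ) : ℝ := Real.log (x + Real.sqrt (x ^ 2 - 1))

/-- Hyperbolic distance between points of the hyperboloid: `d(p,q) = arccosh(−p ∗ q)`. -/
def dHyp (p q : Fin 3 → ℝ) : ℝ := arcosh (-lor p q)


lemma cosh_arcosh {x : ℝ} (hx : 1 ≤ x) : Real.cosh (arcosh x) = x := by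
  have h0 : (0:ℝ) ≤ x ^ 2 - 1 := by nlinarith
  have hs := Real.sq_sqrt h0
  have hsn := Real.sqrt_nonneg (x ^ 2 - 1)
  have hu : 0 < x + Real.sqrt (x ^ 2 - 1) := by nlinarith
  have hinv : (x + Real.sqrt (x ^ 2 - 1))⁻¹ = x - Real.sqrt (x ^ 2 - 1) :=
    inv_eq_of_mul_eq_one_right (by nlinarith)
  rw [arcosh, Real.cosh_eq, Real.exp_neg, Real.exp_log hu, hinv]; ring

lemma sinh_arcosh {x : ℝ} (hx : 1 ≤ x) : Real.sinh (arcosh x) = Real.sqrt (x ^ 2 - 1) := by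
  have h0 : (0:ℝ) ≤ x ^ 2 - 1 := by nlinarith
  have hs := Real.sq_sqrt h0
  have hsn := Real.sqrt_nonneg (x ^ 2 - 1)
  have hu : 0 < x + Real.sqrt (x ^ 2 - 1) := by nlinarith
  have hinv : (x + Real.sqrt (x ^ 2 - 1))⁻¹ = x - Real.sqrt (x ^ 2 - 1) :=
    inv_eq_of_mul_eq_one_right (by nlinarith)
  rw [arcosh, Real.sinh_eq, Real.exp_neg, Real.exp_log hu, hinv]; ring

lemma tanh_arcosh {x : ℝ} (hx : 1 ≤ x) :
    Real.tanh (arcosh x) = Real.sqrt (x ^ 2 - 1) / x := by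
  rw [Real.tanh_eq_sinh_div_cosh, sinh_arcosh hx, cosh_arcosh hx]

lemma lor_comm (u v : Fin 3 → ℝ) : lor u v = lor v u := by simp only [lor]; ring

lemma lor_lt_neg_one {p q : Fin 3 → ℝ} (hp : p ∈ Hyp) (hq : q ∈ Hyp) (h : p ≠ q) :
    lor p q < -1 := by
  obtain ⟨hp1, hp2⟩ := hp
  obtain ⟨hq1, hq2⟩ := hq
  simp only [lor] at hp1 hq1 ⊢
  have hne : (p 0 - q 0) ^ 2 + (p 1 - q 1) ^ 2 > 0 := by
    rcases eq_or_ne (p 0) (q 0) with h0 | h0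
    · rcases eq_or_ne (p 1) (q 1) with h1 | h1
      · exfalso
        have h3 : (p 2 - q 2) * (p 2 + q 2) = 0 := by
          linear_combination hq1 - hp1 + (p 0 + q 0) * h0 + (p 1 + q 1) * h1
        have h2 : p 2 = q 2 := by
          rcases mul_eq_zero.mp h3 with h4 | h4
          · linarith
          · linarith
        exact h (funext fun i => by fin_cases i <;> assumption)
      · have h1' : 0 < (p 1 - q 1) ^ 2 :=
          lt_of_le_of_ne (sq_nonneg _) (Ne.symm (pow_ne_zero 2 (sub_ne_zero.mpr h1)))
        nlinarith [sq_nonneg (p 0 - q 0)]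
    · have h0' : 0 < (p 0 - q 0) ^ 2 :=
        lt_of_le_of_ne (sq_nonneg _) (Ne.symm (pow_ne_zero 2 (sub_ne_zero.mpr h0)))
      nlinarith [sq_nonneg (p 1 - q 1)]
  nlinarith [sq_nonneg (p 0 * q 1 - p 1 * q 0), mul_pos hp2 hq2,
    sq_nonneg (p 2 * q 2 + 1 + p 0 * q 0 + p 1 * q 1), sq_nonneg (p 2 - q 2), sq_nonneg (p 2 + q 2)]

lemma lor_tang (p y z : Fin 3 → ℝ) (hp : lor p p = -1) :
    lor (tang p y) (tang p z) = (Real.sqrt (lor y y + lor p y ^ 2))⁻¹ *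
      ((Real.sqrt (lor z z + lor p z ^ 2))⁻¹ * (lor y z + lor p y * lor p z)) := by
  set s := (Real.sqrt (lor y y + lor p y ^ 2))⁻¹ with hs
  set t := (Real.sqrt (lor z z + lor p z ^ 2))⁻¹ with ht
  show lor (s • (y + lor p y • p)) (t • (z + lor p z • p))
      = s * (t * (lor y z + lor p y * lor p z))
  simp only [lor] at hp ⊢
  simp only [Pi.smul_apply, Pi.add_apply, smul_eq_mul]
  linear_combination s * t * (p 0 * y 0 + p 1 * y 1 - p 2 * y 2) *
    (p 0 * z 0 + p 1 * z 1 - p 2 * z 2) * hp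


set_option maxHeartbeats 1000000 in
/-- Proposition 3.5 (hyperbolic right-triangle trigonometry, timelike case): in a
hyperbolic right triangle with right angle at `r`, legs `B = d(a,r)`, `A = d(r,b)`,
hypotenuse `C = d(a,b)`, and angle `α` at `a`:
`cos α = tanh B / tanh C`, `sin α = sinh A / sinh C`, `tan α = tanh A / sinh B`. -/
theorem hyperbolic_right_triangle_trig
    (a r b : Fin 3 → ℝ) (ha : a ∈ Hyp) (hr : r ∈ Hyp) (hb : b ∈ Hyp)
    (har : a ≠ r) (hrb : r ≠ b) (hab : a ≠ b)
    (hright : lor (tang r a) (tang r b) = 0) :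
    lor (tang a b) (tang a r) = Real.tanh (dHyp a r) / Real.tanh (dHyp a b) ∧
    Real.sqrt (1 - lor (tang a b) (tang a r) ^ 2)
      = Real.sinh (dHyp r b) / Real.sinh (dHyp a b) ∧
    Real.sqrt (1 - lor (tang a b) (tang a r) ^ 2) / lor (tang a b) (tang a r)
      = Real.tanh (dHyp r b) / Real.sinh (dHyp a r) := by
  obtain ⟨X, hXd⟩ : ∃ X : ℝ, X = -lor a r := ⟨_, rfl⟩
  obtain ⟨Y, hYd⟩ : ∃ Y : ℝ, Y = -lor r b := ⟨_, rfl⟩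
  obtain ⟨Z, hZd⟩ : ∃ Z : ℝ, Z = -lor a b := ⟨_, rfl⟩
  have hX : 1 < X := by have := lor_lt_neg_one ha hr har; rw [hXd]; linarith
  have hY : 1 < Y := by have := lor_lt_neg_one hr hb hrb; rw [hYd]; linarith
  have hZ : 1 < Z := by have := lor_lt_neg_one ha hb hab; rw [hZd]; linarith
  have har' : lor a r = -X := by rw [hXd]; ring
  have hrb' : lor r b = -Y := by rw [hYd]; ring
  have hab' : lor a b = -Z := by rw [hZd]; ring
  have hra' : lor r a = -X := by rw [lor_comm, har']
  have hbr' : lor b r = -Y := by rw [lor_comm, hrb']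
  have hX2 : (0:ℝ) < X ^ 2 - 1 := by nlinarith
  have hY2 : (0:ℝ) < Y ^ 2 - 1 := by nlinarith
  have hZ2 : (0:ℝ) < Z ^ 2 - 1 := by nlinarith
  obtain ⟨sX, hsXd⟩ : ∃ s : ℝ, s = Real.sqrt (X ^ 2 - 1) := ⟨_, rfl⟩
  obtain ⟨sY, hsYd⟩ : ∃ s : ℝ, s = Real.sqrt (Y ^ 2 - 1) := ⟨_, rfl⟩
  obtain ⟨sZ, hsZd⟩ : ∃ s : ℝ, s = Real.sqrt (Z ^ 2 - 1) := ⟨_, rfl⟩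
  have hsX : 0 < sX := hsXd ▸ Real.sqrt_pos.mpr hX2
  have hsY : 0 < sY := hsYd ▸ Real.sqrt_pos.mpr hY2
  have hsZ : 0 < sZ := hsZd ▸ Real.sqrt_pos.mpr hZ2
  have hsX2 : sX ^ 2 = X ^ 2 - 1 := hsXd ▸ Real.sq_sqrt hX2.le
  have hsY2 : sY ^ 2 = Y ^ 2 - 1 := hsYd ▸ Real.sq_sqrt hY2.le
  have hsZ2 : sZ ^ 2 = Z ^ 2 - 1 := hsZd ▸ Real.sq_sqrt hZ2.le
  -- Pythagoras: Z = X * Y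
  have hpyth : Z = X * Y := by
    rw [lor_tang r a b hr.1, ha.1, hb.1, hra', hrb', hab'] at hright
    have e1 : (-1 + (-X) ^ 2 : ℝ) = X ^ 2 - 1 := by ring
    have e2 : (-1 + (-Y) ^ 2 : ℝ) = Y ^ 2 - 1 := by ring
    rw [e1, e2, ← hsXd, ← hsYd] at hright
    rcases mul_eq_zero.mp hright with h | h
    · exact absurd h (by positivity)
    rcases mul_eq_zero.mp h with h | h
    · exact absurd h (by positivity)
    · nlinarith
  -- the cosine
  have hcos : lor (tang a b) (tang a r) = Y * sX / sZ := by
    rw [lor_tang a b r ha.1, hb.1, hr.1, hab', har', hbr']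
    have e1 : (-1 + (-Z) ^ 2 : ℝ) = Z ^ 2 - 1 := by ring
    have e2 : (-1 + (-X) ^ 2 : ℝ) = X ^ 2 - 1 := by ring
    rw [e1, e2, ← hsZd, ← hsXd]
    have key : -Y + -Z * -X = Y * sX ^ 2 := by rw [hsX2]; linear_combination X * hpyth
    rw [key]
    field_simp
  -- distances
  have hd1 : dHyp a r = arcosh X := by rw [dHyp, ← hXd]
  have hd2 : dHyp r b = arcosh Y := by rw [dHyp, ← hYd]
  have hd3 : dHyp a b = arcosh Z := by rw [dHyp, ← hZd]
  -- the sine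
  have hsin : Real.sqrt (1 - lor (tang a b) (tang a r) ^ 2) = sY / sZ := by
    have e : 1 - lor (tang a b) (tang a r) ^ 2 = (Y ^ 2 - 1) / (Z ^ 2 - 1) := by
      rw [hcos, div_pow, mul_pow, hsX2, hsZ2]
      have hz2' : Z ^ 2 - 1 ≠ 0 := ne_of_gt hZ2
      field_simp
      linear_combination (Z + X * Y) * hpyth
    rw [e, Real.sqrt_div hY2.le, ← hsYd, ← hsZd]
  refine ⟨?_, ?_, ?_⟩
  · rw [hcos, hd1, hd3, tanh_arcosh hX.le, tanh_arcosh hZ.le, ← hsXd, ← hsZd, hpyth]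
    have hx0 : X ≠ 0 := by positivity
    field_simp
  · rw [hsin, hd2, hd3, sinh_arcosh hY.le, sinh_arcosh hZ.le, ← hsYd, ← hsZd]
  · rw [hsin, hcos, hd2, hd1, tanh_arcosh hY.le, sinh_arcosh hX.le, ← hsYd, ← hsXd]
    field_simp
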